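/- Let ω be a modulus of continuity and define g(ζ) = Σ_{n=1}^∞ ω(4^{-n})(ζ^{4^n} + ζ̄^{4^n}) for ζ on the unit circle. Then the Hankel matrix Γ_g = {ĝ(j+k)}_{j≥1, k≥0} satisfies s_j(Γ_g) ≥ (3/32)·ω((j+1)^{-1}) for all j ≥ 0, where s_j denotes singular values. -/

import Mathlib

open scoped ENNReal

/-- The `j`-th singular value (approximation number) of a bounded operator:
`s_j(T) = inf {‖T - R‖ : rank R ≤ j}`. -/
noncomputable def singularValue {𝕜 H : Type*} [RCLike 𝕜] [NormedAddCommGroup H]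
    [InnerProductSpace 𝕜 H] (j : ℕ) (T : H →L[𝕜] H) : ℝ :=
  sInf {c : ℝ | ∃ R : H →L[𝕜] H, LinearMap.rank (R : H →ₗ[𝕜] H) ≤ j ∧ c = ‖T - R‖}

/-- The Fourier coefficients of `g(ζ) = ∑_{n≥1} ω(4^{-n})(ζ^{4^n} + ζ̄^{4^n})`:
`ĝ(m) = ω(1/m) = ω(4^{-n})` if `m = 4^n` for some `n ≥ 1`, and `ĝ(m) = 0`
otherwise (for `m ≥ 1`). -/
noncomputable def hankelCoef (ω : ℝ → ℝ) (m : ℕ) : ℝ :=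
  letI := Classical.propDecidable
  if ∃ n : ℕ, 1 ≤ n ∧ m = 4 ^ n then ω (1 / (m : ℝ)) else 0

lemma aux_pow (j : ℕ) : 2 * (j + 1) ≤ 4 ^ (j + 1) := by
  induction j with
  | zero => norm_num
  | succ k ih =>
    have h : (4:ℕ) ^ (k + 1 + 1) = 4 * 4 ^ (k + 1) := by ring
    have h1 : 1 ≤ (4:ℕ) ^ (k + 1) := Nat.one_le_pow _ _ (by norm_num)
    omega

lemma aux_arith (n a b : ℕ) (hn : 1 ≤ n) (ha : a < 2 * 4 ^ (n - 1))
    (hb : b < 2 * 4 ^ (n - 1)) :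
    (∃ m : ℕ, 1 ≤ m ∧ b + 1 + (4 ^ n - 1 - a) = 4 ^ m) ↔ a = b := by
  have h4 : (4:ℕ) ^ n = 4 ^ (n - 1) * 4 := by
    rw [← pow_succ]; congr 1; omega
  have hp : 1 ≤ (4:ℕ) ^ (n - 1) := Nat.one_le_pow _ _ (by norm_num)
  constructor
  · rintro ⟨m, hm1, hm⟩
    rcases lt_trichotomy m n with h | h | h
    · have hle : (4:ℕ) ^ m ≤ 4 ^ (n - 1) := Nat.pow_le_pow_right (by norm_num) (by omega)
      omega
    · subst h; omega
    · have hge : (4:ℕ) ^ n * 4 ≤ 4 ^ m := by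
        calc (4:ℕ) ^ n * 4 = 4 ^ (n + 1) := (pow_succ 4 n).symm
        _ ≤ 4 ^ m := Nat.pow_le_pow_right (by norm_num) (by omega)
      omega
  · rintro rfl; exact ⟨n, hn, by omega⟩

lemma aux_scale (ω : ℝ → ℝ) (h0 : ω 0 = 0)
    (hsub : ∀ x : ℝ, 0 ≤ x → ∀ y : ℝ, 0 ≤ y → ω (x + y) ≤ ω x + ω y) :
    ∀ k : ℕ, ∀ t : ℝ, 0 ≤ t → ω (k * t) ≤ k * ω t := by
  intro k
  induction k with
  | zero => intro t ht; simp [h0]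
  | succ m ih =>
    intro t ht
    have he : ((m + 1 : ℕ) : ℝ) * t = (m : ℝ) * t + t := by push_cast; ring
    rw [he]
    have h1 := hsub ((m:ℝ) * t) (by positivity) t ht
    have h2 := ih t ht
    push_cast
    linarith

set_option maxHeartbeats 1000000 in
theorem stmt11 (ω : ℝ → ℝ)
    (hmono : MonotoneOn ω (Set.Ici 0))
    (hcont : ContinuousOn ω (Set.Ici 0))
    (h0 : ω 0 = 0)
    (hpos : ∀ x : ℝ, 0 < x → 0 < ω x)
    (hsub : ∀ x : ℝ, 0 ≤ x → ∀ y : ℝ, 0 ≤ y → ω (x + y) ≤ ω x + ω y)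
    (hsum : Summable fun n : ℕ => ω ((4 : ℝ) ^ (-(n : ℤ))))
    (Γ : lp (fun _ : ℕ => ℝ) 2 →L[ℝ] lp (fun _ : ℕ => ℝ) 2)
    (hΓ : ∀ i k : ℕ,
      inner (𝕜 := ℝ) (Γ (lp.single 2 k (1 : ℝ))) (lp.single 2 i (1 : ℝ))
        = hankelCoef ω (i + 1 + k))
    (j : ℕ) :
    (3 / 32 : ℝ) * ω (1 / (j + 1 : ℝ)) ≤ singularValue j Γ := by
  classical
  have hex : ∃ n : ℕ, 1 ≤ n ∧ 2 * (j + 1) ≤ 4 ^ n := ⟨j + 1, Nat.le_add_left _ _, aux_pow j⟩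
  obtain ⟨hn1, hn2⟩ := Nat.find_spec hex
  set n := Nat.find hex with hn_def
  have hupper : 4 ^ n ≤ 8 * (j + 1) := by
    rcases eq_or_lt_of_le hn1 with h | h
    · have : (4:ℕ) ^ n = 4 := by rw [← h]; norm_num
      omega
    · have hmin := Nat.find_min hex (m := n - 1) (by omega)
      rw [not_and_or] at hmin
      have h2 : 4 ^ (n - 1) < 2 * (j + 1) := by
        rcases hmin with h' | h'
        · omega
        · omega
      have h4 : (4:ℕ) ^ n = 4 ^ (n - 1) * 4 := by rw [← pow_succ]; congr 1; omega
      omega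
  set M := 2 * 4 ^ (n - 1) with hM
  set N := (4:ℕ) ^ n with hN
  have hNM : N = 2 * M := by
    rw [hN, hM]
    have h4 : (4:ℕ) ^ n = 4 ^ (n - 1) * 4 := by rw [← pow_succ]; congr 1; omega
    omega
  have hM1 : 1 ≤ M := by
    have := Nat.one_le_pow (n - 1) 4 (by norm_num)
    omega
  have hjM : j + 1 ≤ M := by omega
  set w := ω (1 / (N : ℝ)) with hw
  have hNpos : (0:ℝ) < (N : ℝ) := by
    have : 0 < N := by omega
    exact_mod_cast this
  have hwpos : 0 < w := hpos _ (by positivity)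
  -- matrix entries on the chosen block
  have hentry : ∀ a b : Fin M,
      inner (𝕜 := ℝ) (Γ (lp.single 2 (N - 1 - (a : ℕ)) (1 : ℝ))) (lp.single 2 (b : ℕ) (1 : ℝ))
        = if a = b then w else 0 := by
    intro a b
    have haM : (a : ℕ) < M := a.isLt
    have hbM : (b : ℕ) < M := b.isLt
    rw [hΓ]
    simp only [hankelCoef]
    have hiff : (∃ m : ℕ, 1 ≤ m ∧ (b:ℕ) + 1 + (N - 1 - (a:ℕ)) = 4 ^ m) ↔ a = b := by
      rw [show N = 4 ^ n from hN,
        aux_arith n (a:ℕ) (b:ℕ) hn1 (hM ▸ a.isLt) (hM ▸ b.isLt)]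
      exact Fin.val_eq_val a b
    by_cases hab : a = b
    · rw [if_pos (hiff.mpr hab)]
      subst hab
      have hidx : (a:ℕ) + 1 + (N - 1 - (a:ℕ)) = N := by omega
      rw [hidx, if_pos rfl]
    · rw [if_neg (fun hc => hab (hiff.mp hc)), if_neg hab]
  -- per-R lower bound
  have key : ∀ R : lp (fun _ : ℕ => ℝ) 2 →L[ℝ] lp (fun _ : ℕ => ℝ) 2,
      LinearMap.rank (R : lp (fun _ : ℕ => ℝ) 2 →ₗ[ℝ] lp (fun _ : ℕ => ℝ) 2) ≤ (j : Cardinal) →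
      w ≤ ‖Γ - R‖ := by
    intro R hR
    let P : lp (fun _ : ℕ => ℝ) 2 →ₗ[ℝ] (Fin M → ℝ) :=
      { toFun := fun y b => y (b : ℕ)
        map_add' := fun y z => by funext b; simp [lp.coeFn_add]
        map_smul' := fun r y => by funext b; simp [lp.coeFn_smul] }
    let V : (Fin M → ℝ) →ₗ[ℝ] lp (fun _ : ℕ => ℝ) 2 :=
      { toFun := fun c => ∑ a : Fin M, c a • lp.single 2 (N - 1 - (a : ℕ)) (1 : ℝ)
        map_add' := fun c d => by simp [add_smul, Finset.sum_add_distrib]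
        map_smul' := fun r c => by simp [Finset.smul_sum, smul_smul] }
    let S : (Fin M → ℝ) →ₗ[ℝ] (Fin M → ℝ) :=
      (P ∘ₗ (R : lp (fun _ : ℕ => ℝ) 2 →ₗ[ℝ] lp (fun _ : ℕ => ℝ) 2)) ∘ₗ V
    have hrankS : LinearMap.rank S ≤ (j : Cardinal) := by
      calc LinearMap.rank S
          ≤ LinearMap.rank (P ∘ₗ (R : lp (fun _ : ℕ => ℝ) 2 →ₗ[ℝ] lp (fun _ : ℕ => ℝ) 2)) :=
            LinearMap.rank_comp_le_left _ _
        _ ≤ LinearMap.rank (R : lp (fun _ : ℕ => ℝ) 2 →ₗ[ℝ] lp (fun _ : ℕ => ℝ) 2) :=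
            LinearMap.rank_comp_le_right _ _
        _ ≤ (j : Cardinal) := hR
    obtain ⟨c, hc0, hSc⟩ : ∃ c : Fin M → ℝ, c ≠ 0 ∧ S c = 0 := by
      by_contra hcon
      push_neg at hcon
      have hinj : Function.Injective S := by
        rw [← LinearMap.ker_eq_bot, LinearMap.ker_eq_bot']
        intro m hm
        by_contra hm0
        exact hcon m hm0 hm
      have h1 : Module.finrank ℝ ↥(LinearMap.range S) = M := by
        rw [LinearMap.finrank_range_of_inj hinj]
        simp
      have h2 : Module.finrank ℝ ↥(LinearMap.range S) ≤ j := by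
        have h := Cardinal.toNat_le_toNat hrankS (Cardinal.nat_lt_aleph0 j)
        rwa [Cardinal.toNat_natCast] at h
      omega
    set x := V c with hx
    have hxdef : x = ∑ a : Fin M, c a • lp.single 2 (N - 1 - (a : ℕ)) (1 : ℝ) := rfl
    -- coordinates of x
    have hxapp : ∀ m : ℕ, x m = ∑ a : Fin M, (if m = N - 1 - (a : ℕ) then c a else 0) := by
      intro m
      have hco : (x : ∀ _ : ℕ, ℝ) =
          ∑ a : Fin M, c a • ((lp.single 2 (N - 1 - (a : ℕ)) (1 : ℝ)) : ∀ _ : ℕ, ℝ) := by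
        rw [hxdef, lp.coeFn_sum]
        refine Finset.sum_congr rfl fun a _ => ?_
        exact lp.coeFn_smul _ _
      have := congrFun hco m
      rw [this]
      rw [Finset.sum_apply]
      refine Finset.sum_congr rfl fun a _ => ?_
      simp [lp.single_apply, eq_rec_constant, Pi.single_apply]
    have hxck : ∀ a : Fin M, x (N - 1 - (a : ℕ)) = c a := by
      intro a
      rw [hxapp]
      rw [Finset.sum_eq_single a]
      · simp
      · intro a' _ haa'
        have haM : (a : ℕ) < M := a.isLt
        have haM' : (a' : ℕ) < M := a'.isLt
        have hne : N - 1 - (a : ℕ) ≠ N - 1 - (a' : ℕ) := by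
          intro hcc
          apply haa'
          have : (a' : ℕ) = (a : ℕ) := by omega
          exact Fin.val_injective this
        simp [hne]
      · intro h; exact absurd (Finset.mem_univ a) h
    have hxnorm : ‖x‖ ^ 2 = ∑ a : Fin M, c a * c a := by
      rw [← real_inner_self_eq_norm_sq]
      rw [hxdef, sum_inner]
      refine Finset.sum_congr rfl fun a _ => ?_
      rw [real_inner_smul_left, lp.inner_single_left]
      have : inner (𝕜 := ℝ) (1 : ℝ) (x (N - 1 - (a:ℕ))) = c a := by
        rw [hxck a]; simp [RCLike.inner_apply]
      rw [show ((∑ a : Fin M, c a • lp.single 2 (N - 1 - (a : ℕ)) (1 : ℝ)) : lp (fun _ : ℕ => ℝ) 2) = x from hxdef.symm, this]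
    set y := (Γ - R) x with hy
    have hyb : ∀ b : Fin M, y ((b : ℕ)) = c b * w := by
      intro b
      have hG : inner (𝕜 := ℝ) (Γ x) (lp.single 2 (b : ℕ) (1:ℝ)) = c b * w := by
        have hGx : Γ x = ∑ a : Fin M, c a • Γ (lp.single 2 (N - 1 - (a : ℕ)) (1 : ℝ)) := by
          rw [hxdef, map_sum]
          exact Finset.sum_congr rfl fun a _ => by rw [map_smul]
        rw [hGx, sum_inner]
        have hterm : ∀ a ∈ Finset.univ, inner (𝕜 := ℝ)
            (c a • Γ (lp.single 2 (N - 1 - (a : ℕ)) (1:ℝ))) (lp.single 2 (b : ℕ) (1:ℝ))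
            = if a = b then c a * w else 0 := by
          intro a _
          rw [real_inner_smul_left, hentry a b]
          split_ifs <;> ring
        rw [Finset.sum_congr rfl hterm, Finset.sum_ite_eq' Finset.univ b (fun a => c a * w)]
        simp
      have hRz : inner (𝕜 := ℝ) (R x) (lp.single 2 (b : ℕ) (1:ℝ)) = 0 := by
        rw [lp.inner_single_right]
        have hSb : (R x) ((b : ℕ)) = S c b := rfl
        rw [hSb, hSc]
        simp [RCLike.inner_apply]
      have h1 : inner (𝕜 := ℝ) y (lp.single 2 (b : ℕ) (1:ℝ)) = c b * w := by
        rw [hy, ContinuousLinearMap.sub_apply, inner_sub_left, hG, hRz, sub_zero]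
      rw [lp.inner_single_right] at h1
      simpa [RCLike.inner_apply] using h1
    have hbessel : ∑ b : Fin M, y ((b : ℕ)) * y ((b : ℕ)) ≤ ‖y‖ ^ 2 := by
      rw [← real_inner_self_eq_norm_sq, lp.inner_eq_tsum]
      have hs : Summable fun i : ℕ => inner (𝕜 := ℝ) (y i) (y i) := lp.summable_inner y y
      have hs' : Summable fun i : ℕ => y i * y i := by
        simpa [RCLike.inner_apply, pow_two] using hs
      calc ∑ b : Fin M, y ((b : ℕ)) * y ((b : ℕ))
          = ∑ m ∈ Finset.range M, y m * y m := Fin.sum_univ_eq_sum_range (fun m => y m * y m) M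
        _ ≤ ∑' m : ℕ, y m * y m := Summable.sum_le_tsum _ (fun m _ => mul_self_nonneg _) hs'
        _ = ∑' m : ℕ, inner (𝕜 := ℝ) (y m) (y m) := by
            refine tsum_congr fun m => ?_
            simp [RCLike.inner_apply, pow_two]
    have hsum2 : ∑ b : Fin M, y ((b : ℕ)) * y ((b : ℕ)) = w ^ 2 * ∑ a : Fin M, c a * c a := by
      rw [Finset.mul_sum]
      refine Finset.sum_congr rfl fun b _ => ?_
      rw [hyb b]; ring
    have hcpos : 0 < ∑ a : Fin M, c a * c a := by
      obtain ⟨a0, ha0⟩ : ∃ a, c a ≠ 0 := by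
        by_contra hcc; push_neg at hcc; exact hc0 (funext hcc)
      exact Finset.sum_pos' (fun a _ => mul_self_nonneg _)
        ⟨a0, Finset.mem_univ _, mul_self_pos.mpr ha0⟩
    have hxpos : 0 < ‖x‖ := by
      by_contra hcc
      push_neg at hcc
      have : ‖x‖ = 0 := le_antisymm hcc (norm_nonneg _)
      rw [← hxnorm] at hcpos
      nlinarith
    have h1 : w ^ 2 * ‖x‖ ^ 2 ≤ ‖y‖ ^ 2 := by rw [hxnorm, ← hsum2]; exact hbessel
    have h2 : ‖y‖ ≤ ‖Γ - R‖ * ‖x‖ := (Γ - R).le_opNorm x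
    have hx2 : 0 < ‖x‖ ^ 2 := by positivity
    have h2' : ‖y‖ ^ 2 ≤ ‖Γ - R‖ ^ 2 * ‖x‖ ^ 2 := by
      nlinarith [norm_nonneg y, norm_nonneg (Γ - R), norm_nonneg x]
    have hw2 : w ^ 2 ≤ ‖Γ - R‖ ^ 2 := by
      have hmul : w ^ 2 * ‖x‖ ^ 2 ≤ ‖Γ - R‖ ^ 2 * ‖x‖ ^ 2 := le_trans h1 h2'
      exact le_of_mul_le_mul_right hmul hx2
    have hsq := Real.sqrt_le_sqrt hw2
    rwa [Real.sqrt_sq hwpos.le, Real.sqrt_sq (norm_nonneg _)] at hsq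
  -- conclude
  have hfinal : (3 / 32 : ℝ) * ω (1 / (j + 1 : ℝ)) ≤ w := by
    have ht : (0:ℝ) < 1 / (8 * (j + 1 : ℝ)) := by positivity
    have hsc := aux_scale ω h0 hsub 8 (1 / (8 * (j + 1 : ℝ))) ht.le
    have heq : ((8:ℕ):ℝ) * (1 / (8 * (j + 1 : ℝ))) = 1 / (j + 1 : ℝ) := by
      push_cast; field_simp
    rw [heq] at hsc
    have hmon : ω (1 / (8 * (j + 1 : ℝ))) ≤ ω (1 / (N : ℝ)) := by
      refine hmono (Set.mem_Ici.mpr ht.le) (Set.mem_Ici.mpr (by positivity)) ?_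
      have hNle : (N : ℝ) ≤ 8 * (j + 1 : ℝ) := by
        have := hupper
        push_cast
        exact_mod_cast this
      exact one_div_le_one_div_of_le hNpos hNle
    push_cast at hsc
    rw [hw]
    nlinarith [hpos _ ht]
  refine le_trans hfinal ?_
  refine le_csInf ⟨‖Γ - 0‖, 0, by simp, rfl⟩ ?_
  rintro b ⟨R, hrk, rfl⟩
  exact key R hrk
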